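/- Let h : ℝ^M → ℝ be differentiable, convex, and l-strongly convex with l > 0, let η > 0 and d ∈ ℝ^M, and let κ₊ be a global minimizer over ℝ^M of κ ↦ ⟨d, κ⟩ + (1/η)·V_h(κ, κₜ). Then ‖κ₊ − κₜ‖ ≤ (η/l)·‖d‖. -/

import Mathlib

open scoped RealInnerProductSpace

/-- Bound on the size of one mirror-descent dual update under strong convexity. -/
theorem mirror_descent_step_bound {M : ℕ} (l η : ℝ) (hl : 0 < l) (hη : 0 < η)
    (h : EuclideanSpace ℝ (Fin M) → ℝ)
    (h' : EuclideanSpace ℝ (Fin M) → EuclideanSpace ℝ (Fin M))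
    (hdiff : ∀ x, HasGradientAt h (h' x) x)
    (hconv : ConvexOn ℝ Set.univ h)
    (hsc : ∀ x y : EuclideanSpace ℝ (Fin M),
      h x ≥ h y + ⟪h' y, x - y⟫ + (l / 2) * ‖x - y‖ ^ 2)
    (V : EuclideanSpace ℝ (Fin M) → EuclideanSpace ℝ (Fin M) → ℝ)
    (hV : ∀ x y, V x y = h x - h y - ⟪h' y, x - y⟫)
    (d κₜ κp : EuclideanSpace ℝ (Fin M))
    (hmin : ∀ κ : EuclideanSpace ℝ (Fin M),
      ⟪d, κp⟫ + (1 / η) * V κp κₜ ≤ ⟪d, κ⟫ + (1 / η) * V κ κₜ) :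
    ‖κp - κₜ‖ ≤ (η / l) * ‖d‖ := by
  have hd1 : HasFDerivAt (fun κ : EuclideanSpace ℝ (Fin M) => ⟪d, κ⟫) (innerSL ℝ d) κp :=
    (innerSL ℝ d).hasFDerivAt
  have hd2 : HasFDerivAt h
      (InnerProductSpace.toDual ℝ (EuclideanSpace ℝ (Fin M)) (h' κp)) κp :=
    (hasGradientAt_iff_hasFDerivAt.mp (hdiff κp))
  have hd3 : HasFDerivAt (fun κ : EuclideanSpace ℝ (Fin M) => ⟪h' κₜ, κ - κₜ⟫)
      (innerSL ℝ (h' κₜ)) κp := by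
    have hid : HasFDerivAt (fun κ : EuclideanSpace ℝ (Fin M) => κ - κₜ)
        (ContinuousLinearMap.id ℝ (EuclideanSpace ℝ (Fin M))) κp :=
      (hasFDerivAt_id κp).sub_const κₜ
    have := ((innerSL ℝ (h' κₜ)).hasFDerivAt (x := κp - κₜ)).comp κp hid
    exact this
  set D : EuclideanSpace ℝ (Fin M) →L[ℝ] ℝ := innerSL ℝ d +
    (1 / η) • (InnerProductSpace.toDual ℝ (EuclideanSpace ℝ (Fin M)) (h' κp) -
      innerSL ℝ (h' κₜ)) with hD
  have hFd : HasFDerivAt (fun κ => ⟪d, κ⟫ + (1 / η) * V κ κₜ) D κp := by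
    have : HasFDerivAt (fun κ : EuclideanSpace ℝ (Fin M) =>
        ⟪d, κ⟫ + (1 / η) * (h κ - h κₜ - ⟪h' κₜ, κ - κₜ⟫)) D κp :=
      hd1.add ((((hd2.sub_const (h κₜ)).sub hd3)).const_mul (1 / η))
    refine this.congr_of_eventuallyEq ?_
    filter_upwards with κ
    rw [hV]
  have hloc : IsLocalMin (fun κ => ⟪d, κ⟫ + (1 / η) * V κ κₜ) κp :=
    Filter.Eventually.of_forall (fun κ => hmin κ)
  have hD0 : D = 0 := hloc.hasFDerivAt_eq_zero hFd
  set v : EuclideanSpace ℝ (Fin M) := κp - κₜ with hv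
  have hDv : ⟪d, v⟫ + (1 / η) * (⟪h' κp, v⟫ - ⟪h' κₜ, v⟫) = 0 := by
    have := congrArg (fun (L : EuclideanSpace ℝ (Fin M) →L[ℝ] ℝ) => L v) hD0
    simpa [hD, InnerProductSpace.toDual_apply_apply, smul_eq_mul] using this
  have key : ⟪h' κp, v⟫ - ⟪h' κₜ, v⟫ = -η * ⟪d, v⟫ := by
    have hηne : η ≠ 0 := ne_of_gt hη
    generalize ha : ⟪d, v⟫ = a at hDv ⊢
    generalize hb : ⟪h' κp, v⟫ - ⟪h' κₜ, v⟫ = b at hDv ⊢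
    have h1 : (1 / η) * b = -a := by linarith
    have : η * ((1 / η) * b) = η * (-a) := by rw [h1]
    calc b = η * ((1 / η) * b) := by field_simp
      _ = η * (-a) := this
      _ = -η * a := by ring
  have hsc1 := hsc κp κₜ
  have hsc2 := hsc κₜ κp
  have hmono : ⟪h' κp, v⟫ - ⟪h' κₜ, v⟫ ≥ l * ‖v‖ ^ 2 := by
    have e2 : ⟪h' κp, κₜ - κp⟫ = -⟪h' κp, v⟫ := by
      rw [hv, ← inner_neg_right]; congr 1; abel
    have e3 : ‖κₜ - κp‖ = ‖v‖ := by rw [hv, ← norm_neg]; congr 1; abel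
    rw [← hv] at hsc1
    rw [e2, e3] at hsc2
    nlinarith
  have hcs : -η * ⟪d, v⟫ ≤ η * (‖d‖ * ‖v‖) := by
    have habs := abs_real_inner_le_norm d v
    have h2 : -⟪d, v⟫ ≤ ‖d‖ * ‖v‖ := by
      have h1 := (abs_le.mp habs).1
      linarith
    calc -η * ⟪d, v⟫ = η * (-⟪d, v⟫) := by ring
      _ ≤ η * (‖d‖ * ‖v‖) := by
        exact mul_le_mul_of_nonneg_left h2 (le_of_lt hη)
  have hfin : l * ‖v‖ ^ 2 ≤ η * (‖d‖ * ‖v‖) := by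
    calc l * ‖v‖ ^ 2 ≤ ⟪h' κp, v⟫ - ⟪h' κₜ, v⟫ := hmono
      _ = -η * ⟪d, v⟫ := key
      _ ≤ η * (‖d‖ * ‖v‖) := hcs
  show ‖v‖ ≤ (η / l) * ‖d‖
  rcases eq_or_lt_of_le (norm_nonneg v) with hz | hz
  · rw [← hz]; positivity
  · rw [div_mul_eq_mul_div, le_div_iff₀ hl]
    have := mul_le_mul_of_nonneg_right hfin (le_of_lt (inv_pos.mpr hz))
    calc ‖v‖ * l = (l * ‖v‖ ^ 2) * ‖v‖⁻¹ := by field_simp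
      _ ≤ (η * (‖d‖ * ‖v‖)) * ‖v‖⁻¹ := this
      _ = η * ‖d‖ := by field_simp
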